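/- Let H be an N×N Hermitian complex matrix, S a subset of its index set with complement S̄, and T a normal, invertible |S|×|S| complex matrix. If T commutes with the block ((H^k))_{SS} for every natural number k, then there exists a normal N×N complex matrix Q such that Q_{SS} = T, Q_{SS̄} = 0, Q_{S̄S} = 0, and Q commutes with H (i.e. QH = HQ). -/

import Mathlib

set_option linter.unusedSectionVars false
open Matrix
noncomputable section

open Matrix

noncomputable section LatentAux
namespace LatentAux

section General
variable {𝕜 : Type*} [RCLike 𝕜] {m n p : Type*} [Fintype m] [Fintype n] [Fintype p]
  [DecidableEq m] [DecidableEq n] [DecidableEq p]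

lemma toEuclideanLin_mul (A : Matrix m n 𝕜) (B : Matrix n p 𝕜) :
    Matrix.toEuclideanLin (A * B) =
      (Matrix.toEuclideanLin A).comp (Matrix.toEuclideanLin B) := by
  apply LinearMap.ext; intro x
  simp [Matrix.toEuclideanLin_apply, Matrix.mulVec_mulVec]

lemma toEuclideanLin_pow (A : Matrix n n 𝕜) (k : ℕ) :
    Matrix.toEuclideanLin (A ^ k) = (Matrix.toEuclideanLin A) ^ k := by
  induction k with
  | zero =>
    rw [pow_zero, pow_zero]
    apply LinearMap.ext; intro x
    simp [Matrix.toEuclideanLin_apply]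
  | succ k ih =>
    rw [pow_succ, pow_succ, toEuclideanLin_mul, ih]; rfl

lemma toEuclideanLin_apply_single (A : Matrix m n 𝕜) (j : n) (i : m) :
    Matrix.toEuclideanLin A (EuclideanSpace.single j 1) i = A i j := by
  rw [Matrix.toEuclideanLin_apply]
  have h1 : (EuclideanSpace.single j (1:𝕜)).ofLp = Pi.single j 1 :=
    PiLp.ofLp_single _ _ _
  rw [h1, Matrix.mulVec_single]
  simp

end General

variable {N : ℕ} (S : Finset (Fin N))

/-- Embed an `S × S` matrix as an `N × N` matrix supported on `S × S`. -/
def emb (T : Matrix ↥S ↥S ℂ) : Matrix (Fin N) (Fin N) ℂ := fun i j =>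
  if hi : i ∈ S then (if hj : j ∈ S then T ⟨i, hi⟩ ⟨j, hj⟩ else 0) else 0

lemma emb_apply_mem (T : Matrix ↥S ↥S ℂ) (u s : ↥S) :
    emb S T (u : Fin N) (s : Fin N) = T u s := by
  simp [emb]

lemma emb_apply_left (T : Matrix ↥S ↥S ℂ) {i : Fin N} (hi : i ∉ S) (j : Fin N) :
    emb S T i j = 0 := by simp [emb, hi]

lemma emb_apply_right (T : Matrix ↥S ↥S ℂ) (i : Fin N) {j : Fin N} (hj : j ∉ S) :
    emb S T i j = 0 := by simp [emb, hj]

lemma emb_conjTranspose (T : Matrix ↥S ↥S ℂ) : (emb S T)ᴴ = emb S Tᴴ := by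
  ext i j
  by_cases hi : i ∈ S <;> by_cases hj : j ∈ S <;>
    simp [emb, conjTranspose_apply, hi, hj]

/-- Sum over `Fin N` of a function vanishing off `S` equals the sum over `↥S`. -/
lemma sum_eq_sum_subtype (f : Fin N → ℂ) (hf : ∀ i ∉ S, f i = 0) :
    ∑ i : Fin N, f i = ∑ i : ↥S, f (i : Fin N) := by
  rw [Finset.sum_coe_sort S f]
  exact (Finset.sum_subset (Finset.subset_univ S) (fun x _ hx => hf x hx)).symm

lemma mul_emb_apply (T : Matrix ↥S ↥S ℂ) (M : Matrix (Fin N) (Fin N) ℂ) (i : Fin N) (s : ↥S) :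
    (M * emb S T) i (s : Fin N) = ∑ u : ↥S, M i (u : Fin N) * T u s := by
  rw [Matrix.mul_apply]
  rw [sum_eq_sum_subtype S _ (fun w hw => by rw [emb_apply_left S T hw]; ring)]
  exact Finset.sum_congr rfl fun u _ => by rw [emb_apply_mem]

lemma emb_mul_apply (T : Matrix ↥S ↥S ℂ) (M : Matrix (Fin N) (Fin N) ℂ) (u : ↥S) (j : Fin N) :
    (emb S T * M) (u : Fin N) j = ∑ w : ↥S, T u w * M (w : Fin N) j := by
  rw [Matrix.mul_apply]
  rw [sum_eq_sum_subtype S _ (fun w hw => by rw [emb_apply_right S T _ hw]; ring)]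
  exact Finset.sum_congr rfl fun w _ => by rw [emb_apply_mem]

lemma emb_mul (A B : Matrix ↥S ↥S ℂ) : emb S (A * B) = emb S A * emb S B := by
  ext i j
  by_cases hi : i ∈ S
  · by_cases hj : j ∈ S
    · have h1 : emb S (A * B) i j = ∑ w : ↥S, A ⟨i, hi⟩ w * B w ⟨j, hj⟩ := by
        simp [emb, hi, hj, Matrix.mul_apply]
      have h2 := emb_mul_apply S A (emb S B) ⟨i, hi⟩ j
      rw [h1, h2]
      exact Finset.sum_congr rfl fun w _ => by simp [emb, hj, w.2]
    · rw [emb_apply_right S _ _ hj, mul_apply]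
      refine (Finset.sum_eq_zero fun w _ => ?_).symm
      rw [emb_apply_right S _ _ hj, mul_zero]
  · rw [emb_apply_left S _ hi, mul_apply]
    refine (Finset.sum_eq_zero fun w _ => ?_).symm
    rw [emb_apply_left S _ hi, zero_mul]

lemma emb_one_mul_apply (M : Matrix (Fin N) (Fin N) ℂ) (u : ↥S) (j : Fin N) :
    (emb S 1 * M) (u : Fin N) j = M (u : Fin N) j := by
  rw [emb_mul_apply]
  rw [Finset.sum_eq_single u (fun w _ hw => by simp [Matrix.one_apply, Ne.symm hw]) (by simp)]
  simp [Matrix.one_apply]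

lemma mul_emb_one_apply (M : Matrix (Fin N) (Fin N) ℂ) (i : Fin N) (s : ↥S) :
    (M * emb S 1) i (s : Fin N) = M i (s : Fin N) := by
  rw [mul_emb_apply]
  rw [Finset.sum_eq_single s (fun w _ hw => by simp [Matrix.one_apply, hw]) (by simp)]
  simp [Matrix.one_apply]


variable {N : ℕ} (S : Finset (Fin N)) (H : Matrix (Fin N) (Fin N) ℂ)

/-- The `S×S` block of `H ^ m`. -/
def Msub (m : ℕ) : Matrix ↥S ↥S ℂ :=
  (H ^ m).submatrix (fun i : ↥S => (i : Fin N)) (fun i : ↥S => (i : Fin N))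

lemma msub_herm (hH : H.IsHermitian) (m : ℕ) : (Msub S H m)ᴴ = Msub S H m := by
  unfold Msub
  rw [Matrix.conjTranspose_submatrix, (hH.pow m).eq]

lemma key_comm {A : Matrix ↥S ↥S ℂ} (hA : ∀ m, A * Msub S H m = Msub S H m * A)
    (m : ℕ) (u s : ↥S) :
    (H ^ m * emb S A) (u : Fin N) (s : Fin N) = (emb S A * H ^ m) (u : Fin N) (s : Fin N) := by
  rw [mul_emb_apply, emb_mul_apply]
  have h1 : ∑ w : ↥S, (H ^ m) (u : Fin N) (w : Fin N) * A w s = (Msub S H m * A) u s := by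
    rw [Matrix.mul_apply]; rfl
  have h2 : ∑ w : ↥S, A u w * (H ^ m) (w : Fin N) (s : Fin N) = (A * Msub S H m) u s := by
    rw [Matrix.mul_apply]; rfl
  rw [h1, h2, hA m]

lemma conj_comm (hH : H.IsHermitian) {A : Matrix ↥S ↥S ℂ}
    (hA : ∀ m, A * Msub S H m = Msub S H m * A) (m : ℕ) :
    Aᴴ * Msub S H m = Msub S H m * Aᴴ := by
  have := congrArg Matrix.conjTranspose (hA m)
  rw [Matrix.conjTranspose_mul, Matrix.conjTranspose_mul, msub_herm S H hH] at this
  exact this.symm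

abbrev ES (N : ℕ) := EuclideanSpace ℂ (Fin N)

/-- Standard basis vector. -/
def ebase {N : ℕ} (i : Fin N) : ES N := EuclideanSpace.single i 1

lemma ebase_def {N : ℕ} (i : Fin N) : ebase i = EuclideanSpace.single i 1 := rfl

def hlin : ES N →ₗ[ℂ] ES N := Matrix.toEuclideanLin H

/-- Generators of the Krylov-type subspace, twisted by `A`. -/
def wv (A : Matrix ↥S ↥S ℂ) : ℕ × ↥S → ES N := fun p =>
  ((hlin H) ^ p.1) (Matrix.toEuclideanLin (emb S A) (ebase (p.2 : Fin N)))

def rmap (A : Matrix ↥S ↥S ℂ) : ((ℕ × ↥S) →₀ ℂ) →ₗ[ℂ] ES N :=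
  Finsupp.linearCombination ℂ (wv S H A)

def K : Submodule ℂ (ES N) := LinearMap.range (rmap S H 1)

lemma hlin_pow_adjoint (hH : H.IsHermitian) (j : ℕ) :
    LinearMap.adjoint ((hlin H) ^ j) = (hlin H) ^ j := by
  rw [← LinearMap.star_eq_adjoint, star_pow, LinearMap.star_eq_adjoint]
  congr 1
  rw [hlin, ← Matrix.toEuclideanLin_conjTranspose_eq_adjoint, hH.eq]

lemma inner_wv (hH : H.IsHermitian) (A B : Matrix ↥S ↥S ℂ) (j k : ℕ) (u s : ↥S) :
    (inner ℂ (wv S H A (j, u)) (wv S H B (k, s)) : ℂ) =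
      (emb S Aᴴ * (H ^ (j + k) * emb S B)) (u : Fin N) (s : Fin N) := by
  unfold wv
  conv_lhs => rw [← hlin_pow_adjoint H hH j]
  rw [LinearMap.adjoint_inner_left]
  rw [← Module.End.mul_apply ((hlin H) ^ j), ← pow_add]
  have hA : Matrix.toEuclideanLin (emb S A) =
      LinearMap.adjoint (Matrix.toEuclideanLin (emb S Aᴴ)) := by
    rw [← emb_conjTranspose, Matrix.toEuclideanLin_conjTranspose_eq_adjoint,
      LinearMap.adjoint_adjoint]
  rw [hA, LinearMap.adjoint_inner_left]
  have hpow : (hlin H) ^ (j + k) = Matrix.toEuclideanLin (H ^ (j + k)) :=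
    (toEuclideanLin_pow H (j + k)).symm
  rw [hpow]
  rw [show Matrix.toEuclideanLin (emb S Aᴴ)
        (Matrix.toEuclideanLin (H ^ (j + k)) (Matrix.toEuclideanLin (emb S B) (ebase (s : Fin N))))
      = Matrix.toEuclideanLin (emb S Aᴴ * (H ^ (j + k) * emb S B)) (ebase (s : Fin N)) by
    rw [toEuclideanLin_mul, toEuclideanLin_mul]; rfl]
  rw [ebase, EuclideanSpace.inner_single_left]
  rw [ebase_def, toEuclideanLin_apply_single]; simp

lemma inner_wv_one_left (hH : H.IsHermitian) (B : Matrix ↥S ↥S ℂ) (j k : ℕ) (u s : ↥S) :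
    (inner ℂ (wv S H 1 (j, u)) (wv S H B (k, s)) : ℂ) =
      (H ^ (j + k) * emb S B) (u : Fin N) (s : Fin N) := by
  rw [inner_wv S H hH, Matrix.conjTranspose_one, emb_one_mul_apply]

lemma inner_wv_one_right (hH : H.IsHermitian) (A : Matrix ↥S ↥S ℂ) (j k : ℕ) (u s : ↥S) :
    (inner ℂ (wv S H A (j, u)) (wv S H 1 (k, s)) : ℂ) =
      (emb S Aᴴ * H ^ (j + k)) (u : Fin N) (s : Fin N) := by
  rw [inner_wv S H hH, ← Matrix.mul_assoc, mul_emb_one_apply]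

lemma inner_swap (hH : H.IsHermitian) {A : Matrix ↥S ↥S ℂ}
    (hA : ∀ m, A * Msub S H m = Msub S H m * A) (i i' : ℕ × ↥S) :
    (inner ℂ (wv S H 1 i) (wv S H A i') : ℂ) = inner ℂ (wv S H Aᴴ i) (wv S H 1 i') := by
  obtain ⟨j, u⟩ := i; obtain ⟨k, s⟩ := i'
  rw [inner_wv_one_left S H hH, inner_wv_one_right S H hH, Matrix.conjTranspose_conjTranspose]
  exact key_comm S H hA (j + k) u s

lemma inner_r_transfer {A B A' B' : Matrix ↥S ↥S ℂ}
    (hpt : ∀ i i', (inner ℂ (wv S H A i) (wv S H B i') : ℂ) = inner ℂ (wv S H A' i) (wv S H B' i'))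
    (x y : (ℕ × ↥S) →₀ ℂ) :
    (inner ℂ (rmap S H A x) (rmap S H B y) : ℂ) = inner ℂ (rmap S H A' x) (rmap S H B' y) := by
  unfold rmap
  rw [Finsupp.linearCombination_apply, Finsupp.linearCombination_apply,
    Finsupp.linearCombination_apply, Finsupp.linearCombination_apply,
    Finsupp.sum, Finsupp.sum, Finsupp.sum, Finsupp.sum,
    sum_inner, sum_inner]
  refine Finset.sum_congr rfl fun i _ => ?_
  rw [inner_sum, inner_sum]
  refine Finset.sum_congr rfl fun i' _ => ?_
  rw [inner_smul_left, inner_smul_left, inner_smul_right, inner_smul_right, hpt]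

lemma mem_K_of_gen {ι' : Type*} {u : ι' → ES N} (hu : ∀ i, u i ∈ K S H)
    (x : ι' →₀ ℂ) : Finsupp.linearCombination ℂ u x ∈ K S H := by
  have hle : LinearMap.range (Finsupp.linearCombination ℂ u) ≤ K S H := by
    rw [Finsupp.range_linearCombination]
    exact Submodule.span_le.2 (Set.range_subset_iff.2 hu)
  exact hle ⟨x, rfl⟩

lemma wv_one_mem (i : ℕ × ↥S) : wv S H 1 i ∈ K S H :=
  ⟨Finsupp.single i 1, by rw [rmap, Finsupp.linearCombination_single, one_smul]⟩

lemma wv_smul_sum (A B : Matrix ↥S ↥S ℂ) (k : ℕ) (s : ↥S) :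
    ∑ u : ↥S, B u s • wv S H A (k, u) = wv S H (A * B) (k, s) := by
  unfold wv
  rw [emb_mul, toEuclideanLin_mul]
  have h1 : ∀ u : ↥S, B u s • ((hlin H) ^ k) (Matrix.toEuclideanLin (emb S A) (ebase (u : Fin N)))
      = ((hlin H) ^ k) (Matrix.toEuclideanLin (emb S A) (B u s • ebase (u : Fin N))) := by
    intro u; rw [_root_.map_smul, _root_.map_smul]
  rw [Finset.sum_congr rfl fun u _ => h1 u, ← map_sum, ← map_sum]
  congr 1
  rw [LinearMap.comp_apply]
  congr 1
  have h2 : Matrix.toEuclideanLin (emb S B) (ebase (s : Fin N))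
      = ∑ u : ↥S, B u s • ebase (u : Fin N) := by
    refine PiLp.ext fun i => ?_
    rw [WithLp.ofLp_sum, Finset.sum_apply i Finset.univ]
    have hL : Matrix.toEuclideanLin (emb S B) (ebase (s : Fin N)) i = emb S B i (s : Fin N) :=
      toEuclideanLin_apply_single _ _ _
    have hR : ∀ u : ↥S, (B u s • ebase (u : Fin N)) i
        = B u s * (if i = (u : Fin N) then 1 else 0) := by
      intro u
      rw [PiLp.smul_apply, ebase, EuclideanSpace.single_apply, smul_eq_mul]
    rw [hL, Finset.sum_congr rfl fun u _ => hR u]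
    by_cases hi : i ∈ S
    · rw [Finset.sum_eq_single (⟨i, hi⟩ : ↥S)
        (fun w _ hw => by
          rw [if_neg (fun hc => hw (by apply Subtype.ext; rw [← hc]))]; ring)
        (by simp)]
      rw [if_pos rfl, mul_one]
      simp [emb, hi]
    · rw [emb_apply_left S _ hi]
      refine (Finset.sum_eq_zero fun w _ => ?_).symm
      rw [if_neg (fun hc : i = (w : Fin N) => hi (by rw [hc]; exact w.2)), mul_zero]
  rw [h2]

lemma wv_decomp (B : Matrix ↥S ↥S ℂ) (k : ℕ) (s : ↥S) :
    wv S H B (k, s) = ∑ u : ↥S, B u s • wv S H 1 (k, u) := by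
  rw [wv_smul_sum S H 1 B k s, one_mul]

lemma wv_mem (B : Matrix ↥S ↥S ℂ) (i : ℕ × ↥S) : wv S H B i ∈ K S H := by
  obtain ⟨k, s⟩ := i
  rw [wv_decomp]
  exact Submodule.sum_mem _ fun u _ => Submodule.smul_mem _ _ (wv_one_mem S H (k, u))

lemma rmap_mem (B : Matrix ↥S ↥S ℂ) (x : (ℕ × ↥S) →₀ ℂ) : rmap S H B x ∈ K S H :=
  mem_K_of_gen S H (wv_mem S H B) x

lemma rmap_ker (hH : H.IsHermitian) {A : Matrix ↥S ↥S ℂ}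
    (hA : ∀ m, A * Msub S H m = Msub S H m * A) :
    ∀ x, rmap S H 1 x = 0 → rmap S H A x = 0 := by
  intro x hx
  have h1 : ∀ z, (inner ℂ (rmap S H 1 z) (rmap S H A x) : ℂ) = 0 := by
    intro z
    rw [inner_r_transfer S H (inner_swap S H hH hA) z x, hx, inner_zero_right]
  obtain ⟨x', hx'⟩ := rmap_mem S H A x
  have h2 := h1 x'
  rw [hx'] at h2
  exact inner_self_eq_zero.mp h2

/-- Lift `rmap A` through the quotient to a map defined on `K`. -/
def liftK (A : Matrix ↥S ↥S ℂ) (hk : ∀ x, rmap S H 1 x = 0 → rmap S H A x = 0) :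
    ↥(K S H) →ₗ[ℂ] ES N :=
  (Submodule.liftQ (LinearMap.ker (rmap S H 1)) (rmap S H A)
      (fun x hx => LinearMap.mem_ker.mpr (hk x (LinearMap.mem_ker.mp hx)))) ∘ₗ
    (LinearMap.quotKerEquivRange (rmap S H 1)).symm.toLinearMap

lemma liftK_apply (A : Matrix ↥S ↥S ℂ) (hk : ∀ x, rmap S H 1 x = 0 → rmap S H A x = 0)
    (x : (ℕ × ↥S) →₀ ℂ) (hmem : rmap S H 1 x ∈ K S H) :
    liftK S H A hk ⟨rmap S H 1 x, hmem⟩ = rmap S H A x := by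
  unfold liftK
  have h1 : (rmap S H 1).quotKerEquivRange.symm ⟨rmap S H 1 x, hmem⟩
      = Submodule.Quotient.mk x :=
    LinearMap.quotKerEquivRange_symm_apply_image (rmap S H 1) x hmem
  show ((LinearMap.ker (rmap S H 1)).liftQ (rmap S H A)
      (fun x hx => LinearMap.mem_ker.mpr (hk x (LinearMap.mem_ker.mp hx))))
      ((rmap S H 1).quotKerEquivRange.symm ⟨rmap S H 1 x, hmem⟩) = rmap S H A x
  rw [h1, Submodule.liftQ_apply]

/-- Orthogonal projection onto `K` as an endomorphism of the ambient space. -/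
def projK : ES N →ₗ[ℂ] ES N :=
  (K S H).subtype ∘ₗ (Submodule.orthogonalProjectionOnto (K S H)).toLinearMap

lemma projK_of_mem {y : ES N} (hy : y ∈ K S H) : projK S H y = y := by
  unfold projK
  rw [LinearMap.comp_apply, ContinuousLinearMap.coe_coe]
  exact Submodule.starProjection_eq_self_iff.mpr hy

lemma projK_of_perp {y : ES N} (hy : y ∈ (K S H)ᗮ) : projK S H y = 0 := by
  unfold projK
  rw [LinearMap.comp_apply, ContinuousLinearMap.coe_coe,
    Submodule.orthogonalProjectionOnto_apply_of_mem_orthogonal hy]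
  simp

/-- The lifted operator, extended by `0` on `Kᗮ`. -/
def PhiMap (A : Matrix ↥S ↥S ℂ) (hk : ∀ x, rmap S H 1 x = 0 → rmap S H A x = 0) :
    ES N →ₗ[ℂ] ES N :=
  liftK S H A hk ∘ₗ (Submodule.orthogonalProjectionOnto (K S H)).toLinearMap

lemma PhiMap_rmap (A : Matrix ↥S ↥S ℂ) (hk : ∀ x, rmap S H 1 x = 0 → rmap S H A x = 0)
    (x : (ℕ × ↥S) →₀ ℂ) : PhiMap S H A hk (rmap S H 1 x) = rmap S H A x := by
  unfold PhiMap
  rw [LinearMap.comp_apply, ContinuousLinearMap.coe_coe]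
  have h1 : Submodule.orthogonalProjectionOnto (K S H) (rmap S H 1 x)
      = ⟨rmap S H 1 x, rmap_mem S H 1 x⟩ :=
    Subtype.ext (Submodule.starProjection_eq_self_iff.mpr (rmap_mem S H 1 x))
  rw [h1, liftK_apply]

lemma PhiMap_perp (A : Matrix ↥S ↥S ℂ) (hk : ∀ x, rmap S H 1 x = 0 → rmap S H A x = 0)
    {y : ES N} (hy : y ∈ (K S H)ᗮ) : PhiMap S H A hk y = 0 := by
  unfold PhiMap
  rw [LinearMap.comp_apply, ContinuousLinearMap.coe_coe,
    Submodule.orthogonalProjectionOnto_apply_of_mem_orthogonal hy, map_zero]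

lemma rmap_single (A : Matrix ↥S ↥S ℂ) (i : ℕ × ↥S) (b : ℂ) :
    rmap S H A (Finsupp.single i b) = b • wv S H A i := by
  rw [rmap, Finsupp.linearCombination_single]

/-- `Φ_A ∘ r_B = r_{AB}`. -/
lemma PhiMap_comp_rmap (A B : Matrix ↥S ↥S ℂ)
    (hk : ∀ x, rmap S H 1 x = 0 → rmap S H A x = 0) :
    PhiMap S H A hk ∘ₗ rmap S H B = rmap S H (A * B) := by
  apply Finsupp.lhom_ext
  intro a b
  obtain ⟨k, s⟩ := a
  rw [LinearMap.comp_apply, rmap_single, rmap_single, _root_.map_smul]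
  congr 1
  have hz : wv S H B (k, s) = rmap S H 1 (∑ u : ↥S, Finsupp.single (k, u) (B u s)) := by
    rw [map_sum]
    rw [Finset.sum_congr rfl fun u _ => rmap_single S H 1 (k, u) (B u s)]
    exact wv_decomp S H B k s
  rw [hz, PhiMap_rmap, map_sum,
    Finset.sum_congr rfl fun u _ => rmap_single S H A (k, u) (B u s)]
  exact wv_smul_sum S H A B k s

def shiftF : ((ℕ × ↥S) →₀ ℂ) →ₗ[ℂ] ((ℕ × ↥S) →₀ ℂ) :=
  Finsupp.lmapDomain ℂ ℂ (fun p => (p.1 + 1, p.2))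

lemma hlin_comp_rmap (A : Matrix ↥S ↥S ℂ) :
    hlin H ∘ₗ rmap S H A = rmap S H A ∘ₗ shiftF S := by
  apply Finsupp.lhom_ext
  intro a b
  obtain ⟨k, s⟩ := a
  rw [LinearMap.comp_apply, LinearMap.comp_apply, shiftF, Finsupp.lmapDomain_apply,
    Finsupp.mapDomain_single, rmap_single, rmap_single, _root_.map_smul]
  congr 1
  show hlin H (wv S H A (k, s)) = wv S H A (k + 1, s)
  unfold wv
  rw [← Module.End.mul_apply, ← pow_succ']

lemma hlin_mem {y : ES N} (hy : y ∈ K S H) : hlin H y ∈ K S H := by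
  obtain ⟨x, rfl⟩ := (show y ∈ LinearMap.range (rmap S H 1) from hy)
  rw [← LinearMap.comp_apply, hlin_comp_rmap]
  exact rmap_mem S H 1 _

lemma hlin_adjoint (hH : H.IsHermitian) : LinearMap.adjoint (hlin H) = hlin H := by
  have := hlin_pow_adjoint H hH 1
  rwa [pow_one] at this

lemma hlin_perp (hH : H.IsHermitian) {y : ES N} (hy : y ∈ (K S H)ᗮ) :
    hlin H y ∈ (K S H)ᗮ := by
  rw [Submodule.mem_orthogonal]
  intro u hu
  have h1 : (inner ℂ u (hlin H y) : ℂ) = inner ℂ (hlin H u) y := by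
    have h0 := LinearMap.adjoint_inner_right (hlin H) u y
    rw [hlin_adjoint H hH] at h0
    exact h0
  rw [h1]
  exact (Submodule.mem_orthogonal _ _).mp hy _ (hlin_mem S H hu)

lemma ext_on (f g : ES N →ₗ[ℂ] ES N)
    (h1 : ∀ x, f (rmap S H 1 x) = g (rmap S H 1 x))
    (h2 : ∀ y ∈ (K S H)ᗮ, f y = g y) : f = g := by
  apply LinearMap.ext
  intro v
  have hv : v ∈ K S H ⊔ (K S H)ᗮ := by
    rw [Submodule.sup_orthogonal_of_hasOrthogonalProjection (K := K S H)]
    exact Submodule.mem_top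
  obtain ⟨a, ha, b, hb, rfl⟩ := Submodule.mem_sup.mp hv
  obtain ⟨x, rfl⟩ := (show a ∈ LinearMap.range (rmap S H 1) from ha)
  rw [map_add, map_add, h1 x, h2 b hb]

def Qop (A : Matrix ↥S ↥S ℂ) (hk : ∀ x, rmap S H 1 x = 0 → rmap S H A x = 0) :
    ES N →ₗ[ℂ] ES N :=
  PhiMap S H A hk + (LinearMap.id - projK S H)

lemma Qop_apply (A : Matrix ↥S ↥S ℂ) (hk : ∀ x, rmap S H 1 x = 0 → rmap S H A x = 0)
    (y : ES N) : Qop S H A hk y = PhiMap S H A hk y + (y - projK S H y) := rfl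

lemma Qop_rmap (A B : Matrix ↥S ↥S ℂ) (hk : ∀ x, rmap S H 1 x = 0 → rmap S H A x = 0)
    (x : (ℕ × ↥S) →₀ ℂ) : Qop S H A hk (rmap S H B x) = rmap S H (A * B) x := by
  rw [Qop_apply, projK_of_mem S H (rmap_mem S H B x), sub_self, add_zero,
    ← LinearMap.comp_apply, PhiMap_comp_rmap]

lemma Qop_perp (A : Matrix ↥S ↥S ℂ) (hk : ∀ x, rmap S H 1 x = 0 → rmap S H A x = 0)
    {y : ES N} (hy : y ∈ (K S H)ᗮ) : Qop S H A hk y = y := by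
  rw [Qop_apply, projK_of_perp S H hy, sub_zero, PhiMap_perp S H A hk hy, zero_add]

lemma projK_selfadj (x y : ES N) :
    (inner ℂ (projK S H x) y : ℂ) = inner ℂ x (projK S H y) :=
  Submodule.inner_starProjection_left_eq_right _ x y

lemma PhiMap_apply_eq (A : Matrix ↥S ↥S ℂ) (hk : ∀ x, rmap S H 1 x = 0 → rmap S H A x = 0)
    (y : ES N) (ya : (ℕ × ↥S) →₀ ℂ) (hya : rmap S H 1 ya = projK S H y) :
    PhiMap S H A hk y = rmap S H A ya := by
  unfold PhiMap
  rw [LinearMap.comp_apply, ContinuousLinearMap.coe_coe]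
  have h1 : Submodule.orthogonalProjectionOnto (K S H) y = ⟨rmap S H 1 ya, hya ▸ rmap_mem S H 1 ya⟩ :=
    Subtype.ext (show _ = rmap S H 1 ya from hya.symm)
  rw [h1, liftK_apply]

lemma inner_PhiMap (hH : H.IsHermitian) {A : Matrix ↥S ↥S ℂ}
    (hA : ∀ m, A * Msub S H m = Msub S H m * A)
    (hkA : ∀ x, rmap S H 1 x = 0 → rmap S H A x = 0)
    (hkAH : ∀ x, rmap S H 1 x = 0 → rmap S H Aᴴ x = 0)
    (x y : ES N) :
    (inner ℂ (PhiMap S H Aᴴ hkAH x) y : ℂ) = inner ℂ x (PhiMap S H A hkA y) := by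
  obtain ⟨xa, hxa⟩ := (show ((Submodule.orthogonalProjectionOnto (K S H) x : ES N)) ∈
    LinearMap.range (rmap S H 1) from (Submodule.orthogonalProjectionOnto (K S H) x).2)
  obtain ⟨ya, hya⟩ := (show ((Submodule.orthogonalProjectionOnto (K S H) y : ES N)) ∈
    LinearMap.range (rmap S H 1) from (Submodule.orthogonalProjectionOnto (K S H) y).2)
  have hxa' : rmap S H 1 xa = projK S H x := hxa
  have hya' : rmap S H 1 ya = projK S H y := hya
  rw [PhiMap_apply_eq S H Aᴴ hkAH x xa hxa', PhiMap_apply_eq S H A hkA y ya hya']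
  have hy2 : y = rmap S H 1 ya + (y - projK S H y) := by rw [hya']; abel
  have hx2 : x = rmap S H 1 xa + (x - projK S H x) := by rw [hxa']; abel
  conv_lhs => rw [hy2]
  conv_rhs => rw [hx2]
  rw [inner_add_right, inner_add_left]
  have hperp_y : y - projK S H y ∈ (K S H)ᗮ := Submodule.sub_starProjection_mem_orthogonal y
  have hperp_x : x - projK S H x ∈ (K S H)ᗮ := Submodule.sub_starProjection_mem_orthogonal x
  have hz1 : (inner ℂ (rmap S H Aᴴ xa) (y - projK S H y) : ℂ) = 0 :=
    (Submodule.mem_orthogonal _ _).mp hperp_y _ (rmap_mem S H Aᴴ xa)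
  have hz2 : (inner ℂ (x - projK S H x) (rmap S H A ya) : ℂ) = 0 :=
    inner_eq_zero_symm.mp ((Submodule.mem_orthogonal _ _).mp hperp_x _ (rmap_mem S H A ya))
  rw [hz1, hz2, add_zero, add_zero]
  exact inner_r_transfer S H (fun i i' => (inner_swap S H hH hA i i').symm) xa ya

lemma Qop_adjoint (hH : H.IsHermitian) {A : Matrix ↥S ↥S ℂ}
    (hA : ∀ m, A * Msub S H m = Msub S H m * A)
    (hkA : ∀ x, rmap S H 1 x = 0 → rmap S H A x = 0)
    (hkAH : ∀ x, rmap S H 1 x = 0 → rmap S H Aᴴ x = 0) :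
    LinearMap.adjoint (Qop S H A hkA) = Qop S H Aᴴ hkAH := by
  symm
  rw [LinearMap.eq_adjoint_iff]
  intro x y
  rw [Qop_apply, Qop_apply, inner_add_left, inner_add_right, inner_sub_left, inner_sub_right,
    inner_PhiMap S H hH hA hkA hkAH, projK_selfadj]

lemma t1_e (s : ↥S) :
    Matrix.toEuclideanLin (emb S 1) (ebase (s : Fin N)) = ebase (s : Fin N) := by
  refine PiLp.ext fun i => ?_
  have hL : Matrix.toEuclideanLin (emb S 1) (ebase (s : Fin N)) i = emb S 1 i (s : Fin N) :=
    toEuclideanLin_apply_single _ _ _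
  rw [hL, show ebase (s : Fin N) i = if i = (s : Fin N) then 1 else 0 from
    EuclideanSpace.single_apply _ _ _]
  by_cases hi : i ∈ S
  · simp only [emb, hi, dif_pos, s.2, Matrix.one_apply]
    by_cases he : i = (s : Fin N)
    · rw [if_pos he, if_pos (Subtype.ext he)]
    · rw [if_neg he, if_neg (fun hc => he (congrArg Subtype.val hc))]
  · rw [emb_apply_left S _ hi, if_neg (fun hc : i = (s : Fin N) => hi (by rw [hc]; exact s.2))]

lemma Qop_ebase (A : Matrix ↥S ↥S ℂ) (hk : ∀ x, rmap S H 1 x = 0 → rmap S H A x = 0)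
    (s : ↥S) : Qop S H A hk (ebase (s : Fin N))
      = Matrix.toEuclideanLin (emb S A) (ebase (s : Fin N)) := by
  have h1 : ebase (s : Fin N) = rmap S H 1 (Finsupp.single (0, s) 1) := by
    rw [rmap_single, one_smul]
    show ebase (s : Fin N) = ((hlin H) ^ 0) (Matrix.toEuclideanLin (emb S 1) (ebase (s : Fin N)))
    rw [pow_zero, Module.End.one_apply, t1_e]
  conv_lhs => rw [h1]
  rw [Qop_rmap, mul_one, rmap_single, one_smul]
  show ((hlin H) ^ 0) (Matrix.toEuclideanLin (emb S A) (ebase (s : Fin N))) = _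
  rw [pow_zero, Module.End.one_apply]

end LatentAux
end LatentAux

open LatentAux

/-- If a normal invertible matrix `T` commutes with every block `(H^k)_{SS}` of powers of a
Hermitian matrix `H`, then there exists a normal matrix `Q` with `Q_{SS} = T`,
`Q_{SS̄} = 0`, `Q_{S̄S} = 0`, commuting with `H`. -/
theorem latent_symmetry_lifts {N : ℕ} (S : Finset (Fin N))
    (H : Matrix (Fin N) (Fin N) ℂ) (hH : H.IsHermitian)
    (T : Matrix ↥S ↥S ℂ) (hTnormal : T * Tᴴ = Tᴴ * T) (hTinv : IsUnit T)
    (hcomm : ∀ k : ℕ,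
      T * (H ^ k).submatrix (fun i : ↥S => (i : Fin N)) (fun i : ↥S => (i : Fin N)) =
      (H ^ k).submatrix (fun i : ↥S => (i : Fin N)) (fun i : ↥S => (i : Fin N)) * T) :
    ∃ Q : Matrix (Fin N) (Fin N) ℂ,
      Q * Qᴴ = Qᴴ * Q ∧
      Q.submatrix (fun i : ↥S => (i : Fin N)) (fun i : ↥S => (i : Fin N)) = T ∧
      Q.submatrix (fun i : ↥S => (i : Fin N)) (fun i : ↥Sᶜ => (i : Fin N)) = 0 ∧
      Q.submatrix (fun i : ↥Sᶜ => (i : Fin N)) (fun i : ↥S => (i : Fin N)) = 0 ∧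
      Q * H = H * Q := by
  classical
  have hcommT : ∀ m, T * Msub S H m = Msub S H m * T := hcomm
  have hcommTH : ∀ m, Tᴴ * Msub S H m = Msub S H m * Tᴴ := conj_comm S H hH hcommT
  have hkT : ∀ x, rmap S H 1 x = 0 → rmap S H T x = 0 := rmap_ker S H hH hcommT
  have hkTH : ∀ x, rmap S H 1 x = 0 → rmap S H Tᴴ x = 0 := rmap_ker S H hH hcommTH
  set QL := Qop S H T hkT with hQLdef
  set QL' := Qop S H Tᴴ hkTH with hQL'def
  set Q : Matrix (Fin N) (Fin N) ℂ := Matrix.toEuclideanLin.symm QL with hQdef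
  have hQ : Matrix.toEuclideanLin Q = QL := Matrix.toEuclideanLin.apply_symm_apply QL
  have hadj : LinearMap.adjoint QL = QL' := Qop_adjoint S H hH hcommT hkT hkTH
  have hQH : Matrix.toEuclideanLin Qᴴ = QL' := by
    rw [Matrix.toEuclideanLin_conjTranspose_eq_adjoint, hQ, hadj]
  have hentry : ∀ i j, Q i j = Matrix.toEuclideanLin Q (ebase j) i := fun i j =>
    (toEuclideanLin_apply_single Q j i).symm
  have hQe : ∀ s : ↥S, QL (ebase (s : Fin N))
      = Matrix.toEuclideanLin (emb S T) (ebase (s : Fin N)) := fun s => Qop_ebase S H T hkT s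
  refine ⟨Q, ?_, ?_, ?_, ?_, ?_⟩
  · apply Matrix.toEuclideanLin.injective
    rw [toEuclideanLin_mul, toEuclideanLin_mul, hQ, hQH]
    have hc : QL ∘ₗ QL' = QL' ∘ₗ QL := by
      apply ext_on S H
      · intro x
        rw [LinearMap.comp_apply, LinearMap.comp_apply,
          Qop_rmap S H Tᴴ 1 hkTH x, Qop_rmap S H T 1 hkT x,
          Qop_rmap S H T (Tᴴ * 1) hkT x, Qop_rmap S H Tᴴ (T * 1) hkTH x]
        congr 1
        rw [mul_one, mul_one, hTnormal]
      · intro y hy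
        simp only [LinearMap.comp_apply, hQLdef, hQL'def, Qop_perp S H Tᴴ hkTH hy, Qop_perp S H T hkT hy]
    rw [hc]
  · ext u s
    rw [Matrix.submatrix_apply, hentry, hQ, hQe s, ebase_def, toEuclideanLin_apply_single,
      emb_apply_mem]
  · ext u j
    rw [Matrix.submatrix_apply, hentry, hQ]
    have h1 : QL (ebase ((j : Fin N))) ((u : Fin N))
        = (inner ℂ (ebase ((u : Fin N))) (QL (ebase ((j : Fin N)))) : ℂ) := by
      simp only [ebase_def, EuclideanSpace.inner_single_left]
      simp
    have h2 := LinearMap.adjoint_inner_left QL (ebase ((j : Fin N))) (ebase ((u : Fin N)))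
    rw [h1, ← h2, hadj, Qop_ebase S H Tᴴ hkTH u]
    simp only [ebase_def]
    rw [EuclideanSpace.inner_single_right, toEuclideanLin_apply_single,
      emb_apply_left S Tᴴ (Finset.mem_compl.mp j.2)]
    simp
  · ext u s
    rw [Matrix.submatrix_apply, hentry, hQ, hQe s, ebase_def, toEuclideanLin_apply_single,
      emb_apply_left S T (Finset.mem_compl.mp u.2)]
    simp
  · apply Matrix.toEuclideanLin.injective
    rw [toEuclideanLin_mul, toEuclideanLin_mul, hQ,
      show Matrix.toEuclideanLin H = hlin H from rfl]
    apply ext_on S H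
    · intro x
      rw [LinearMap.comp_apply, LinearMap.comp_apply]
      have e1 : hlin H (rmap S H 1 x) = rmap S H 1 (shiftF S x) := by
        rw [← LinearMap.comp_apply, hlin_comp_rmap]; rfl
      have e2 : hlin H (rmap S H (T * 1) x) = rmap S H (T * 1) (shiftF S x) := by
        rw [← LinearMap.comp_apply, hlin_comp_rmap]; rfl
      rw [e1, Qop_rmap S H T 1 hkT, Qop_rmap S H T 1 hkT, e2]
    · intro y hy
      rw [LinearMap.comp_apply, LinearMap.comp_apply,
        Qop_perp S H T hkT (hlin_perp S H hH hy), Qop_perp S H T hkT hy]
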